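/- Fix a real number λ ≠ 0. For every integer n ≥ 1, S^{(1)}_{J,λ}(n,1) = Σ_{m=1}^{n} (m−1)! · C(λ−1, m−1) · S_{1,λ}(n,m), where C(λ−1, m−1) = (λ−1)(λ−2)⋯(λ−m+1)/(m−1)! is the generalized binomial coefficient. -/

import Mathlib

open Finset

/-- The degenerate falling factorial `(x)_{n,λ} = x(x−λ)⋯(x−(n−1)λ)`;
for `lam = 1` it is the ordinary falling factorial `(x)_n`. -/
noncomputable def dff (lam : ℝ) (n : ℕ) (x : ℝ) : ℝ :=
  ∏ i ∈ Finset.range n, (x - i * lam)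

/-- The degenerate exponential `e_λ^x(t) = Σ_{n≥0} (x)_{n,λ} t^n/n!`. -/
noncomputable def degExp (lam x : ℝ) : PowerSeries ℝ :=
  PowerSeries.mk fun n => dff lam n x / n.factorial

/-- The degenerate logarithm `log_λ(1+t) = Σ_{n≥1} λ^{n−1}(1)_{n,1/λ} t^n/n!`. -/
noncomputable def degLog (lam : ℝ) : PowerSeries ℝ :=
  PowerSeries.mk fun n =>
    if n = 0 then 0 else lam ^ (n - 1) * dff (1 / lam) n 1 / n.factorial

/-- Composition `f(g(t))` of formal power series (valid definition of composition
when `g` has zero constant term, as in all uses below). -/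
noncomputable def pscomp (f g : PowerSeries ℝ) : PowerSeries ℝ :=
  PowerSeries.mk fun n =>
    ∑ k ∈ Finset.range (n + 1), (PowerSeries.coeff k f) * (PowerSeries.coeff n (g ^ k))

section Aux

open Polynomial

lemma dff_succ (lam : ℝ) (n : ℕ) (x : ℝ) : dff lam (n+1) x = dff lam n x * (x - n * lam) := by
  simp [dff, Finset.prod_range_succ]

lemma dff_eq_desc (n : ℕ) (x : ℝ) : dff 1 n x = (descPochhammer ℝ n).eval x := by
  induction n with
  | zero => simp [dff]
  | succ n ih => rw [dff_succ, descPochhammer_succ_eval, ih]; ring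

lemma desc_smeval (k : ℕ) (r : ℝ) : (descPochhammer ℤ k).smeval r = dff 1 k r := by
  rw [← Polynomial.aeval_eq_smeval, aeval_def, ← Polynomial.eval_map,
    descPochhammer_map, dff_eq_desc]

lemma dff_vand (k : ℕ) (x y : ℝ) :
    dff 1 k (x + y) = ∑ j ∈ range (k+1), (k.choose j : ℝ) * (dff 1 j x * dff 1 (k-j) y) := by
  have h := Ring.descPochhammer_smeval_add (R := ℝ) (r := x) (s := y) k (Commute.all x y)
  rw [desc_smeval] at h
  simp only [desc_smeval] at h
  rw [h, Nat.sum_antidiagonal_eq_sum_range_succ_mk]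

lemma degExp_mul (x y : ℝ) : degExp 1 x * degExp 1 y = degExp 1 (x + y) := by
  ext n
  rw [PowerSeries.coeff_mul]
  rw [Nat.sum_antidiagonal_eq_sum_range_succ_mk]
  simp only [degExp, PowerSeries.coeff_mk]
  rw [dff_vand, Finset.sum_div]
  refine Finset.sum_congr rfl fun j hj => ?_
  have hjn : j ≤ n := Nat.lt_succ_iff.mp (Finset.mem_range.mp hj)
  rw [Nat.cast_choose ℝ hjn]
  have h1 : (j.factorial : ℝ) ≠ 0 := Nat.cast_ne_zero.mpr (Nat.factorial_ne_zero j)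
  have h2 : ((n-j).factorial : ℝ) ≠ 0 := Nat.cast_ne_zero.mpr (Nat.factorial_ne_zero _)
  have h3 : (n.factorial : ℝ) ≠ 0 := Nat.cast_ne_zero.mpr (Nat.factorial_ne_zero _)
  field_simp

lemma degExp_zero : degExp 1 0 = 1 := by
  ext n
  simp only [degExp, PowerSeries.coeff_mk, PowerSeries.coeff_one]
  cases n with
  | zero => simp [dff]
  | succ n =>
    have : dff 1 (n+1) 0 = 0 := by
      apply Finset.prod_eq_zero (Finset.mem_range.mpr (Nat.succ_pos n))
      simp
    simp [this]

lemma degExp_pow (lam : ℝ) (j : ℕ) : (degExp 1 lam) ^ j = degExp 1 (j * lam) := by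
  induction j with
  | zero => simpa using degExp_zero.symm
  | succ j ih =>
    rw [pow_succ, ih, degExp_mul]
    push_cast
    ring_nf

lemma degLog_eq (lam : ℝ) (hlam : lam ≠ 0) :
    degLog lam = PowerSeries.C lam⁻¹ * (degExp 1 lam - 1) := by
  ext n
  rw [PowerSeries.coeff_C_mul, map_sub, PowerSeries.coeff_one]
  simp only [degLog, degExp, PowerSeries.coeff_mk]
  cases n with
  | zero => simp [dff]
  | succ n =>
    simp only [Nat.succ_ne_zero, if_false, Nat.add_sub_cancel]
    have key : lam ^ (n+1) * dff (1/lam) (n+1) 1 = dff 1 (n+1) lam := by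
      have hp : lam ^ (n+1) = ∏ _i ∈ range (n+1), lam := by simp
      rw [dff, dff, hp, ← Finset.prod_mul_distrib]
      refine Finset.prod_congr rfl fun i _ => ?_
      field_simp
    rw [sub_zero, ← key]
    field_simp
    ring

lemma alt_sum (n : ℕ) : ∑ i ∈ range (n+1), (-1:ℝ)^i * (n.choose i : ℝ) = if n = 0 then 1 else 0 := by
  have h := Int.alternating_sum_range_choose (n := n)
  have := congrArg (fun z : ℤ => (z : ℝ)) h
  push_cast at this
  simpa using this

lemma orth (m l : ℕ) :
    ∑ j ∈ range (m+1), (-1:ℝ)^(j+m) * (m.choose j : ℝ) * (j.choose l : ℝ)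
      = if l = m then 1 else 0 := by
  rcases lt_or_ge m l with h | h
  · rw [if_neg (by omega)]
    refine Finset.sum_eq_zero fun j hj => ?_
    have : j.choose l = 0 := Nat.choose_eq_zero_of_lt (by
      have := Finset.mem_range.mp hj; omega)
    simp [this]
  · have h1 : ∑ j ∈ Ico 0 l, (-1:ℝ)^(j+m) * (m.choose j : ℝ) * (j.choose l : ℝ) = 0 :=
      Finset.sum_eq_zero fun j hj => by
        have : j.choose l = 0 := Nat.choose_eq_zero_of_lt (Finset.mem_Ico.mp hj).2
        simp [this]
    rw [Finset.range_eq_Ico, ← Finset.sum_Ico_consecutive _ (Nat.zero_le l) (by omega), h1,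
      zero_add, Finset.sum_Ico_eq_sum_range]
    have h2 : ∀ i ∈ range (m + 1 - l),
        (-1:ℝ)^((l+i)+m) * (m.choose (l+i) : ℝ) * ((l+i).choose l : ℝ)
          = ((m.choose l : ℝ) * (-1:ℝ)^(l+m)) * ((-1:ℝ)^i * ((m-l).choose i : ℝ)) := by
      intro i hi
      have hi' : i ≤ m - l := by have := Finset.mem_range.mp hi; omega
      have hc := Nat.choose_mul (n := m) (k := l + i) (s := l) (by omega)
      have hc' : (m.choose (l+i) : ℝ) * ((l+i).choose l : ℝ)
          = (m.choose l : ℝ) * ((m-l).choose i : ℝ) := by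
        have he : l + i - l = i := by omega
        rw [← Nat.cast_mul, hc, he, Nat.cast_mul]
      rw [mul_assoc, hc', show (l+i)+m = (l+m)+i by omega, pow_add]
      ring
    rw [Finset.sum_congr rfl h2, ← Finset.mul_sum,
      show m + 1 - l = (m - l) + 1 by omega, alt_sum (m - l)]
    rcases eq_or_lt_of_le h with rfl | hlt
    · rw [if_pos (by omega), if_pos rfl, Nat.choose_self, Nat.cast_one,
        show l + l = 2 * l by omega, pow_mul]
      norm_num
    · rw [if_neg (by omega), if_neg (by omega), mul_zero]

lemma dff_lam_mul (lam : ℝ) (l j : ℕ) :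
    dff lam l ((j:ℝ) * lam) = lam ^ l * dff 1 l (j : ℝ) := by
  have hp : lam ^ l = ∏ _i ∈ range l, lam := by simp
  rw [dff, dff, hp, ← Finset.prod_mul_distrib]
  exact Finset.prod_congr rfl fun i _ => by ring

lemma dff_one_nat (l j : ℕ) : dff 1 l (j : ℝ) = (l.factorial : ℝ) * (j.choose l : ℝ) := by
  rw [dff_eq_desc, descPochhammer_eval_eq_descFactorial,
    Nat.descFactorial_eq_factorial_mul_choose]
  push_cast
  ring

lemma coeff_degLog_pow (lam : ℝ) (hlam : lam ≠ 0) (m n : ℕ) :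
    PowerSeries.coeff n ((degLog lam)^m)
      = (lam⁻¹)^m * ∑ j ∈ range (m+1),
          (-1:ℝ)^(j+m) * (m.choose j : ℝ) * (dff 1 n ((j:ℝ)*lam) / n.factorial) := by
  rw [degLog_eq lam hlam, mul_pow, ← map_pow, sub_pow (degExp 1 lam) 1 m]
  rw [PowerSeries.coeff_C_mul, map_sum]
  congr 1
  refine Finset.sum_congr rfl fun j hj => ?_
  rw [one_pow, degExp_pow]
  have : ((-1 : PowerSeries ℝ))^(j+m) * degExp 1 ((j:ℝ)*lam) * 1 * ((m.choose j : ℕ) : PowerSeries ℝ)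
      = PowerSeries.C ((-1:ℝ)^(j+m) * (m.choose j : ℝ)) * degExp 1 ((j:ℝ)*lam) := by
    rw [map_mul, map_pow, map_neg, map_one, map_natCast]
    ring
  rw [this, PowerSeries.coeff_C_mul]
  simp only [degExp, PowerSeries.coeff_mk]

end Aux

theorem jindalrae_stirling1_at_one (lam : ℝ) (hlam : lam ≠ 0)
    (S1 SJ1 : ℕ → ℕ → ℝ)
    (hS1 : ∀ (n : ℕ) (x : ℝ), dff 1 n x = ∑ l ∈ Finset.range (n + 1), S1 n l * dff lam l x)
    (hSJ1 : ∀ k : ℕ, (PowerSeries.C ((k.factorial : ℝ))⁻¹) * (pscomp (degLog lam) (degLog lam)) ^ k = PowerSeries.mk (fun n => if k ≤ n then SJ1 n k / n.factorial else 0))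
    : ∀ n : ℕ, 1 ≤ n → SJ1 n 1 = ∑ m ∈ Finset.Icc 1 n, ((m - 1).factorial : ℝ) * (dff 1 (m - 1) (lam - 1) / (m - 1).factorial) * S1 n m := by
  -- step 1: coefficient formula for powers of degLog in terms of S1
  have key : ∀ m n : ℕ, m ≤ n → PowerSeries.coeff n ((degLog lam)^m)
      = (m.factorial : ℝ) * S1 n m / n.factorial := by
    intro m n hmn
    rw [coeff_degLog_pow lam hlam m n]
    have hplug : ∀ j : ℕ, dff 1 n ((j:ℝ)*lam)
        = ∑ l ∈ range (n+1), S1 n l * (lam^l * ((l.factorial:ℝ) * (j.choose l:ℝ))) := by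
      intro j
      rw [hS1 n ((j:ℝ)*lam)]
      exact Finset.sum_congr rfl fun l _ => by rw [dff_lam_mul, dff_one_nat]
    have hsum : ∑ j ∈ range (m+1),
        (-1:ℝ)^(j+m) * (m.choose j : ℝ) * (dff 1 n ((j:ℝ)*lam) / n.factorial)
        = ∑ l ∈ range (n+1), (S1 n l * lam^l * (l.factorial:ℝ) / n.factorial) *
            (∑ j ∈ range (m+1), (-1:ℝ)^(j+m) * (m.choose j : ℝ) * (j.choose l : ℝ)) := by
      simp only [hplug, Finset.sum_div, Finset.mul_sum]
      rw [Finset.sum_comm]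
      refine Finset.sum_congr rfl fun l _ => ?_
      exact Finset.sum_congr rfl fun j _ => by ring
    rw [hsum]
    have horth : ∀ l ∈ range (n+1),
        (S1 n l * lam^l * (l.factorial:ℝ) / n.factorial) *
          (∑ j ∈ range (m+1), (-1:ℝ)^(j+m) * (m.choose j : ℝ) * (j.choose l : ℝ))
        = if l = m then S1 n m * lam^m * (m.factorial:ℝ) / n.factorial else 0 := by
      intro l _
      rw [orth]
      split_ifs with hl
      · subst hl; ring
      · ring
    rw [Finset.sum_congr rfl horth, Finset.sum_ite_eq' (range (n+1)) m
      (fun _ => S1 n m * lam^m * (m.factorial:ℝ) / n.factorial),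
      if_pos (Finset.mem_range.mpr (by omega))]
    have : (lam⁻¹)^m * lam^m = 1 := by
      rw [← mul_pow, inv_mul_cancel₀ hlam, one_pow]
    field_simp
    rw [one_div, mul_right_comm, this, one_mul]
  -- step 2: read off coefficient n from hSJ1 at k = 1
  intro n hn
  have h := congrArg (PowerSeries.coeff n) (hSJ1 1)
  rw [pow_one] at h
  simp only [Nat.factorial_one, Nat.cast_one, inv_one, map_one, one_mul,
    pscomp, PowerSeries.coeff_mk, if_pos hn] at h
  -- h : ∑ k ∈ range (n+1), coeff k (degLog lam) * coeff n ((degLog lam)^k) = SJ1 n 1 / n!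
  rw [Finset.sum_range_succ'] at h
  have h0 : PowerSeries.coeff 0 (degLog lam) = 0 := by
    simp [degLog]
  rw [h0, zero_mul, add_zero] at h
  have hcoeffL : ∀ k : ℕ, PowerSeries.coeff (k+1) (degLog lam)
      = lam⁻¹ * (dff 1 (k+1) lam / (k+1).factorial) := by
    intro k
    rw [degLog_eq lam hlam, PowerSeries.coeff_C_mul, map_sub, PowerSeries.coeff_one]
    simp [degExp]
  have hterm : ∀ i ∈ range n,
      PowerSeries.coeff (i+1) (degLog lam) * PowerSeries.coeff n ((degLog lam)^(i+1))
        = dff 1 i (lam - 1) * S1 n (i+1) / n.factorial := by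
    intro i hi
    have hin : i + 1 ≤ n := Finset.mem_range.mp hi
    rw [hcoeffL i, key (i+1) n hin]
    have hshift : dff 1 (i+1) lam = lam * dff 1 i (lam - 1) := by
      rw [dff, dff, Finset.prod_range_succ']
      simp only [Nat.cast_zero, zero_mul, sub_zero, Nat.cast_add, Nat.cast_one]
      rw [mul_comm]
      congr 1
      exact Finset.prod_congr rfl fun j _ => by push_cast; ring
    rw [hshift]
    have hf1 : (((i+1)).factorial : ℝ) ≠ 0 := Nat.cast_ne_zero.mpr (Nat.factorial_ne_zero _)
    have hf2 : ((n).factorial : ℝ) ≠ 0 := Nat.cast_ne_zero.mpr (Nat.factorial_ne_zero _)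
    field_simp
  rw [Finset.sum_congr rfl hterm] at h
  -- step 3: conclude
  have hgoal : ∑ m ∈ Finset.Icc 1 n, ((m - 1).factorial : ℝ) *
      (dff 1 (m - 1) (lam - 1) / (m - 1).factorial) * S1 n m
      = ∑ i ∈ range n, dff 1 i (lam - 1) * S1 n (i+1) := by
    rw [← Finset.Ico_add_one_right_eq_Icc, Finset.sum_Ico_eq_sum_range]
    simp only [Nat.add_sub_cancel, Nat.add_sub_cancel_left]
    refine Finset.sum_congr rfl fun i _ => ?_
    have hf : ((i).factorial : ℝ) ≠ 0 := Nat.cast_ne_zero.mpr (Nat.factorial_ne_zero _)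
    rw [Nat.add_comm 1 i]
    field_simp
  rw [hgoal]
  rw [← Finset.sum_div] at h
  have hf : ((n).factorial : ℝ) ≠ 0 := Nat.cast_ne_zero.mpr (Nat.factorial_ne_zero _)
  field_simp at h
  linarith [h]
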